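/- Let $d = 2k$ be even and $v \in \mathfrak{S}_d$. Then there exists $\sigma \in \mathfrak{S}_d$ with $\check{\sigma} = \sigma$ such that for all $i \in \{1,\dots,k\}$, $v\sigma(i) = \min\{v\sigma(j) \mid i \le j \le d - i + 1\}$. -/
import Mathlib


/-- `σ̌(i) = d - σ(d-i+1) + 1`, i.e. `rev ∘ σ ∘ rev` in zero-based indexing. -/
def checkPerm {d : ℕ} (σ : Equiv.Perm (Fin d)) : Equiv.Perm (Fin d) :=
  (Fin.revPerm.trans σ).trans Fin.revPerm

/-- For `d = 2k` even and any `v ∈ 𝔖_d`, there is `σ` with `σ̌ = σ` such that for each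
`i ∈ {1,…,k}`, `vσ(i) = min { vσ(j) | j ∈ [i, ī] }` (where `ī = d-i+1`). -/
theorem exists_check_fixed_min_on_intervals (k : ℕ) (hk : 0 < k)
    (v : Equiv.Perm (Fin (2 * k))) :
    ∃ σ : Equiv.Perm (Fin (2 * k)), checkPerm σ = σ ∧
      ∀ i : Fin (2 * k), ∀ _hi : (i : ℕ) < k,
        v (σ i) = ((Finset.Icc i i.rev).image fun j => v (σ j)).min'
          (Finset.Nonempty.image ⟨i, Finset.mem_Icc.mpr
            ⟨le_refl i, by simp only [Fin.le_def, Fin.val_rev]; omega⟩⟩ _) := by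
  classical
  set S : Finset (Fin (2*k)) := Finset.univ.filter (fun p => v p < v p.rev) with hS
  have hrev_ne : ∀ p : Fin (2*k), p.rev ≠ p := by
    intro p h
    have := congrArg Fin.val h
    simp [Fin.val_rev] at this
    omega
  have hSiff : ∀ p : Fin (2*k), p ∈ S ↔ v p < v p.rev := by
    intro p; simp [hS]
  have hSrev : ∀ p : Fin (2*k), p ∈ S ↔ p.rev ∉ S := by
    intro p
    rw [hSiff, hSiff, Fin.rev_rev]
    constructor
    · intro h h'; exact absurd (h.trans h') (lt_irrefl _)
    · intro h
      rcases lt_or_ge (v p) (v p.rev) with h1 | h1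
      · exact h1
      · rcases eq_or_lt_of_le h1 with h2 | h2
        · exact absurd (v.injective h2) (hrev_ne p)
        · exact absurd h2 h
  have hScard : S.card = k := by
    have h1 : Sᶜ = S.image Fin.rev := by
      ext x
      simp only [Finset.mem_compl, Finset.mem_image]
      constructor
      · intro hx
        refine ⟨x.rev, ?_, Fin.rev_rev x⟩
        rw [hSrev x.rev, Fin.rev_rev] at *
        by_contra h; exact hx (by rwa [hSrev x, not_not] at *)
      · rintro ⟨p, hp, rfl⟩
        exact (hSrev p).mp hp
    have h2 : Sᶜ.card = S.card := by
      rw [h1]; exact Finset.card_image_of_injective _ Fin.rev_injective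
    have h3 : S.card + Sᶜ.card = Fintype.card (Fin (2*k)) := Finset.card_add_card_compl S
    rw [h2, Fintype.card_fin] at h3
    omega
  set T : Finset (Fin (2*k)) := S.image v with hT
  have hTcard : T.card = k := by
    rw [hT, Finset.card_image_of_injective _ v.injective, hScard]
  set g := T.orderIsoOfFin hTcard with hg
  have hmemS : ∀ x : Fin k, v.symm (g x) ∈ S := by
    intro x
    have hx : (g x : Fin (2*k)) ∈ T := (g x).2
    obtain ⟨p, hp, hvp⟩ := Finset.mem_image.mp hx
    have : v.symm (g x) = p := by rw [← hvp]; exact v.symm_apply_apply p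
    rwa [this]
  have hvf : ∀ x : Fin k, v (v.symm (g x)) = (g x : Fin (2*k)) :=
    fun x => v.apply_symm_apply _
  have hrevlt : ∀ i : Fin (2*k), ¬ (i : ℕ) < k → (i.rev : ℕ) < k := by
    intro i h; simp [Fin.val_rev]; omega
  set f : Fin (2*k) → Fin (2*k) := fun i =>
    if h : (i : ℕ) < k then v.symm (g ⟨i, h⟩)
    else (v.symm (g ⟨(i.rev : ℕ), hrevlt i h⟩)).rev with hf
  have hf_lt : ∀ (i : Fin (2*k)) (h : (i:ℕ) < k), f i = v.symm (g ⟨i, h⟩) := by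
    intro i h; simp [hf, h]
  have hf_ge : ∀ (i : Fin (2*k)) (h : ¬ (i:ℕ) < k), f i = (v.symm (g ⟨(i.rev : ℕ), hrevlt i h⟩)).rev := by
    intro i h; simp [hf, h]
  have hginj : ∀ x y : Fin k, (g x : Fin (2*k)) = g y → x = y := by
    intro x y h
    exact g.injective (Subtype.ext h)
  have hinj : Function.Injective f := by
    intro i j hij
    by_cases hi : (i:ℕ) < k <;> by_cases hj : (j:ℕ) < k
    · rw [hf_lt i hi, hf_lt j hj] at hij
      have := hginj _ _ (v.symm.injective hij)
      simp only [Fin.mk.injEq] at this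
      exact Fin.ext this
    · exfalso
      rw [hf_lt i hi, hf_ge j hj] at hij
      have h1 : f i ∈ S := by rw [hf_lt i hi]; exact hmemS _
      have h2 : (v.symm (g ⟨(j.rev : ℕ), hrevlt j hj⟩)).rev ∉ S :=
        (hSrev _).mp (hmemS _)
      rw [hf_lt i hi] at h1
      rw [hij] at h1
      exact h2 h1
    · exfalso
      rw [hf_ge i hi, hf_lt j hj] at hij
      have h1 : v.symm (g ⟨(j:ℕ), hj⟩) ∈ S := hmemS _
      have h2 : (v.symm (g ⟨(i.rev : ℕ), hrevlt i hi⟩)).rev ∉ S :=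
        (hSrev _).mp (hmemS _)
      rw [hij] at h2
      exact h2 h1
    · rw [hf_ge i hi, hf_ge j hj] at hij
      have := hginj _ _ (v.symm.injective (Fin.rev_injective hij))
      simp only [Fin.mk.injEq, Fin.val_rev] at this
      have := i.isLt; have := j.isLt
      exact Fin.ext (by omega)
  set σ : Equiv.Perm (Fin (2*k)) :=
    Equiv.ofBijective f (Finite.injective_iff_bijective.mp hinj) with hσ
  have hσapp : ∀ i, σ i = f i := fun i => rfl
  have hgmono : ∀ x y : Fin k, x ≤ y → (g x : Fin (2*k)) ≤ (g y : Fin (2*k)) := by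
    intro x y hxy
    exact g.monotone hxy
  refine ⟨σ, ?_, ?_⟩
  · ext i
    show ((σ (i.rev)).rev : ℕ) = _
    rw [hσapp, hσapp]
    by_cases hi : (i:ℕ) < k
    · have hi' : ¬ ((i.rev : ℕ) < k) := by simp [Fin.val_rev]; omega
      rw [hf_ge _ hi', hf_lt i hi, Fin.rev_rev]
      congr 2
      exact Fin.ext (by simp [Fin.rev_rev])
    · rw [hf_lt i.rev (hrevlt i hi), hf_ge i hi]
  · intro i hi
    symm
    apply le_antisymm
    · apply Finset.min'_le
      exact Finset.mem_image_of_mem _ (Finset.mem_Icc.mpr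
        ⟨le_refl i, by simp only [Fin.le_def, Fin.val_rev]; omega⟩)
    · apply Finset.le_min'
      intro y hy
      obtain ⟨j, hj, rfl⟩ := Finset.mem_image.mp hy
      rw [Finset.mem_Icc] at hj
      have hji : (i:ℕ) ≤ (j:ℕ) := hj.1
      have hjr : (j:ℕ) ≤ 2*k - ((i:ℕ)+1) := by
        have := hj.2; simpa [Fin.le_def, Fin.val_rev] using this
      rw [hσapp, hσapp, hf_lt i hi, hvf]
      by_cases hjk : (j:ℕ) < k
      · rw [hf_lt j hjk, hvf]
        exact hgmono _ _ hji
      · rw [hf_ge j hjk]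
        have h1 : (g ⟨(i:ℕ), hi⟩ : Fin (2*k)) ≤ (g ⟨(j.rev:ℕ), hrevlt j hjk⟩ : Fin (2*k)) := by
          apply hgmono
          simp only [Fin.mk_le_mk, Fin.val_rev]
          omega
        have h2 : v (v.symm (g ⟨(j.rev:ℕ), hrevlt j hjk⟩)) <
            v ((v.symm (g ⟨(j.rev:ℕ), hrevlt j hjk⟩)).rev) :=
          (hSiff _).mp (hmemS _)
        rw [hvf] at h2
        exact h1.trans h2.le
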